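/- Let p(z) = Σ_{j=0}^m a_j z^j be a complex polynomial of degree m such that, for some k ≥ 1, k|a_m| ≥ |a_{m-1}| ≥ ... ≥ |a_1| ≥ |a_0|, and such that all coefficients a_j lie in the sector |arg(a_j) − β| ≤ α ≤ π/2 for some real β. Then every zero z of p satisfies |z + k − 1| ≤ (1/|a_m|)[ (k|a_m| − |a_0|)(sin α + cos α) + |a_0| + 2 sin α Σ_{j=0}^{m-1} |a_j| ]. -/

import Mathlib

open Complex in
lemma sector_sub_bound (α β : ℝ) (hα0 : 0 ≤ α) (hα : α ≤ Real.pi / 2)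
    (a b : ℂ) (hab : ‖b‖ ≤ ‖a‖)
    (ha : |Complex.arg a - β| ≤ α) (hb : |Complex.arg b - β| ≤ α) :
    ‖a - b‖ ≤ (‖a‖ - ‖b‖) * Real.cos α
      + (‖a‖ + ‖b‖) * Real.sin α := by
  have hpi := Real.pi_pos
  have hs : 0 ≤ Real.sin α := Real.sin_nonneg_of_nonneg_of_le_pi hα0 (by linarith)
  have hc : 0 ≤ Real.cos α := Real.cos_nonneg_of_mem_Icc ⟨by linarith, hα⟩
  have hre : ‖a‖ * ‖b‖ * Real.cos (2 * α) ≤ (a * (starRingEnd ℂ) b).re := by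
    by_cases hb0 : b = 0
    · simp [hb0]
    by_cases ha0 : a = 0
    · simp [ha0]
    have harg : |Complex.arg a - Complex.arg b| ≤ 2 * α := by
      have h1 : Complex.arg a - Complex.arg b = (Complex.arg a - β) - (Complex.arg b - β) := by ring
      calc |Complex.arg a - Complex.arg b| ≤ |Complex.arg a - β| + |Complex.arg b - β| := by
            rw [h1]; exact abs_sub _ _
        _ ≤ 2 * α := by linarith
    have hcos : Real.cos (2 * α) ≤ Real.cos (Complex.arg a - Complex.arg b) := by
      rw [← Real.cos_abs (Complex.arg a - Complex.arg b)]
      exact Real.cos_le_cos_of_nonneg_of_le_pi (abs_nonneg _) (by linarith) harg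
    have hformula : (a * (starRingEnd ℂ) b).re
        = ‖a‖ * ‖b‖ * Real.cos (Complex.arg a - Complex.arg b) := by
      have hca := Complex.cos_arg ha0
      have hcb := Complex.cos_arg hb0
      have hsa := Complex.sin_arg a
      have hsb := Complex.sin_arg b
      have haa : (‖a‖ : ℝ) ≠ 0 := norm_ne_zero_iff.mpr ha0
      have hbb : (‖b‖ : ℝ) ≠ 0 := norm_ne_zero_iff.mpr hb0
      rw [Real.cos_sub]
      simp only [Complex.mul_re, Complex.conj_re, Complex.conj_im, hca, hcb, hsa, hsb]
      field_simp
      ring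
    rw [hformula]
    exact mul_le_mul_of_nonneg_left hcos (mul_nonneg (norm_nonneg a) (norm_nonneg b))
  have hsq : (‖a - b‖) ^ 2
      = (‖a‖) ^ 2 + (‖b‖) ^ 2 - 2 * (a * (starRingEnd ℂ) b).re := by
    rw [Complex.sq_norm, Complex.sq_norm, Complex.sq_norm, Complex.normSq_sub]
  have hcos2 : Real.cos (2 * α) = 1 - 2 * Real.sin α ^ 2 := by
    rw [Real.cos_two_mul]
    nlinarith [Real.sin_sq_add_cos_sq α]
  have hRHS : 0 ≤ (‖a‖ - ‖b‖) * Real.cos α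
      + (‖a‖ + ‖b‖) * Real.sin α := by
    have := norm_nonneg b
    nlinarith [mul_nonneg (sub_nonneg.2 hab) hc,
      mul_nonneg (add_nonneg ((norm_nonneg b).trans hab) (norm_nonneg b)) hs]
  have hre2 : ‖a‖ * ‖b‖ * (1 - 2 * Real.sin α ^ 2)
      ≤ (a * (starRingEnd ℂ) b).re := by rw [← hcos2]; exact hre
  have hid : (‖a‖ - ‖b‖) ^ 2 * (Real.sin α ^ 2 + Real.cos α ^ 2)
      = (‖a‖ - ‖b‖) ^ 2 := by
    rw [Real.sin_sq_add_cos_sq]; ring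
  have hsq2 : (‖a - b‖) ^ 2 ≤ ((‖a‖ - ‖b‖) * Real.cos α
      + (‖a‖ + ‖b‖) * Real.sin α) ^ 2 := by
    nlinarith [hre2, hid,
      mul_nonneg (mul_nonneg (mul_nonneg (sub_nonneg.2 hab)
        (add_nonneg ((norm_nonneg b).trans hab) (norm_nonneg b))) hs) hc]
  calc ‖a - b‖ = Real.sqrt (‖a - b‖ ^ 2) :=
        (Real.sqrt_sq (norm_nonneg _)).symm
    _ ≤ Real.sqrt (((‖a‖ - ‖b‖) * Real.cos α
        + (‖a‖ + ‖b‖) * Real.sin α) ^ 2) := Real.sqrt_le_sqrt hsq2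
    _ = _ := Real.sqrt_sq hRHS



/-- Scalar case of Theorem 2 (Shah–Liman): if `k ≥ 1`,
`k|a_m| ≥ |a_{m-1}| ≥ ⋯ ≥ |a_0|`, and all coefficients lie in the sector
`|arg(a_j) − β| ≤ α ≤ π/2`, then every zero `z` of `p(z) = ∑_{j=0}^m a_j z^j`
satisfies `|z + k − 1| ≤ (1/|a_m|)[(k|a_m| − |a_0|)(sin α + cos α) + |a_0|
  + 2 sin α ∑_{j=0}^{m-1} |a_j|]`. -/
theorem scalar_shah_liman (m : ℕ) (hm : 0 < m) (a : ℕ → ℂ) (ham : a m ≠ 0)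
    (k : ℝ) (hk : 1 ≤ k)
    (htop : ‖a (m - 1)‖ ≤ k * ‖a m‖)
    (hchain : ∀ j, j + 1 < m → ‖a j‖ ≤ ‖a (j + 1)‖)
    (α β : ℝ) (hα0 : 0 ≤ α) (hα : α ≤ Real.pi / 2)
    (hsector : ∀ j ≤ m, |Complex.arg (a j) - β| ≤ α)
    (z : ℂ) (hz : ∑ j ∈ Finset.range (m + 1), a j * z ^ j = 0) :
    ‖z + (k : ℂ) - 1‖
      ≤ (1 / ‖a m‖)
          * ((k * ‖a m‖ - ‖a 0‖)
                * (Real.sin α + Real.cos α)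
              + ‖a 0‖
              + 2 * Real.sin α * ∑ j ∈ Finset.range m, ‖a j‖) := by
  obtain ⟨n, rfl⟩ : ∃ n, m = n + 1 := ⟨m - 1, (Nat.succ_pred_eq_of_pos hm).symm⟩
  simp only [Nat.add_sub_cancel] at htop
  have hpi := Real.pi_pos
  have hs : 0 ≤ Real.sin α := Real.sin_nonneg_of_nonneg_of_le_pi hα0 (by linarith)
  have hc : 0 ≤ Real.cos α := Real.cos_nonneg_of_mem_Icc ⟨by linarith, hα⟩
  have hsc : 1 ≤ Real.sin α + Real.cos α := by
    nlinarith [Real.sin_sq_add_cos_sq α]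
  have hAm : 0 < ‖a (n + 1)‖ := norm_pos_iff.mpr ham
  have hSig : 0 ≤ ∑ j ∈ Finset.range (n + 1), ‖a j‖ :=
    Finset.sum_nonneg fun j _ => norm_nonneg _
  have hA0 : ‖a 0‖ ≤ k * ‖a (n + 1)‖ := by
    have key : ∀ j, j < n + 1 → ‖a 0‖ ≤ ‖a j‖ := by
      intro j hj
      induction j with
      | zero => exact le_refl _
      | succ i ih => exact (ih (by omega)).trans (hchain i hj)
    exact (key n n.lt_succ_self).trans htop
  rw [one_div, inv_mul_eq_div, le_div_iff₀ hAm]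
  rcases lt_or_ge (‖z‖) 1 with hz1 | hz1
  · -- |z| < 1 : trivial bound
    have h1 : ‖z + (k : ℂ) - 1‖ ≤ ‖z‖ + (k - 1) := by
      have e : z + (k : ℂ) - 1 = z + ((k - 1 : ℝ) : ℂ) := by push_cast; ring
      rw [e]
      refine (norm_add_le _ _).trans ?_
      rw [Complex.norm_real, Real.norm_of_nonneg (by linarith : (0:ℝ) ≤ k - 1)]
    have h2 : ‖z + (k : ℂ) - 1‖ < k := by linarith
    have h3 : k * ‖a (n + 1)‖
        ≤ (k * ‖a (n + 1)‖ - ‖a 0‖) * (Real.sin α + Real.cos α)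
          + ‖a 0‖
          + 2 * Real.sin α * ∑ j ∈ Finset.range (n + 1), ‖a j‖ := by
      nlinarith [mul_nonneg hs hSig]
    nlinarith [mul_lt_mul_of_pos_right h2 hAm]
  · -- main case |z| ≥ 1
    have hz' : (∑ j ∈ Finset.range n, a j * z ^ j) + a n * z ^ n
        + a (n + 1) * z ^ (n + 1) = 0 := by
      rw [Finset.sum_range_succ, Finset.sum_range_succ] at hz
      linear_combination hz
    have e1 : ∑ j ∈ Finset.range n, (a (j + 1) - a j) * z ^ (j + 1)
        = (∑ j ∈ Finset.range n, a (j + 1) * z ^ (j + 1))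
          - ∑ j ∈ Finset.range n, a j * z ^ (j + 1) := by
      rw [← Finset.sum_sub_distrib]
      exact Finset.sum_congr rfl fun j _ => by ring
    have e2 : ∑ j ∈ Finset.range n, a (j + 1) * z ^ (j + 1)
        = (∑ j ∈ Finset.range n, a j * z ^ j) + a n * z ^ n - a 0 := by
      have u1 := Finset.sum_range_succ' (fun j => a j * z ^ j) n
      rw [Finset.sum_range_succ] at u1
      linear_combination -u1
    have e3 : ∑ j ∈ Finset.range n, a j * z ^ (j + 1)
        = z * ∑ j ∈ Finset.range n, a j * z ^ j := by
      rw [Finset.mul_sum]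
      exact Finset.sum_congr rfl fun j _ => by ring
    have hkey : a (n + 1) * z ^ (n + 1) * (z + (k : ℂ) - 1)
        = ((k : ℂ) * a (n + 1) - a n) * z ^ (n + 1)
          + (∑ j ∈ Finset.range n, (a (j + 1) - a j) * z ^ (j + 1)) + a 0 := by
      rw [e1, e2, e3]
      linear_combination (z - 1) * hz'
    -- bound each piece
    have hb1 : ‖(k : ℂ) * a (n + 1) - a n‖
        ≤ (k * ‖a (n + 1)‖ - ‖a n‖) * Real.cos α
          + (k * ‖a (n + 1)‖ + ‖a n‖) * Real.sin α := by
      have habs : ‖(k : ℂ) * a (n + 1)‖ = k * ‖a (n + 1)‖ := by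
        rw [norm_mul, Complex.norm_real, Real.norm_of_nonneg (by linarith : (0:ℝ) ≤ k)]
      have harg : Complex.arg ((k : ℂ) * a (n + 1)) = Complex.arg (a (n + 1)) :=
        Complex.arg_real_mul _ (by linarith)
      have := sector_sub_bound α β hα0 hα ((k : ℂ) * a (n + 1)) (a n)
        (by rw [habs]; exact htop) (by rw [harg]; exact hsector (n + 1) le_rfl)
        (hsector n (by omega))
      rwa [habs] at this
    have hbj : ∀ j ∈ Finset.range n, ‖a (j + 1) - a j‖
        ≤ (‖a (j + 1)‖ - ‖a j‖) * Real.cos α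
          + (‖a (j + 1)‖ + ‖a j‖) * Real.sin α := by
      intro j hj
      have hjn := Finset.mem_range.mp hj
      exact sector_sub_bound α β hα0 hα (a (j + 1)) (a j)
        (hchain j (by omega)) (hsector (j + 1) (by omega)) (hsector j (by omega))
    have hsum : ∑ j ∈ Finset.range n,
          ((‖a (j + 1)‖ - ‖a j‖) * Real.cos α
            + (‖a (j + 1)‖ + ‖a j‖) * Real.sin α)
        = (‖a n‖ - ‖a 0‖) * Real.cos α
          + (2 * (∑ j ∈ Finset.range (n + 1), ‖a j‖)
              - ‖a 0‖ - ‖a n‖) * Real.sin α := by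
      have t1 : ∑ j ∈ Finset.range n, (‖a (j + 1)‖ - ‖a j‖)
          = ‖a n‖ - ‖a 0‖ :=
        Finset.sum_range_sub (fun j => ‖a j‖) n
      have t2 : ∑ j ∈ Finset.range n, (‖a (j + 1)‖ + ‖a j‖)
          = 2 * (∑ j ∈ Finset.range (n + 1), ‖a j‖)
            - ‖a 0‖ - ‖a n‖ := by
        have u1 := Finset.sum_range_succ' (fun j => ‖a j‖) n
        have u2 := Finset.sum_range_succ (fun j => ‖a j‖) n
        have u3 : ∑ j ∈ Finset.range n, (‖a (j + 1)‖ + ‖a j‖)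
            = (∑ j ∈ Finset.range n, ‖a (j + 1)‖)
              + ∑ j ∈ Finset.range n, ‖a j‖ := Finset.sum_add_distrib
        linarith [u1, u2, u3]
      calc ∑ j ∈ Finset.range n,
            ((‖a (j + 1)‖ - ‖a j‖) * Real.cos α
              + (‖a (j + 1)‖ + ‖a j‖) * Real.sin α)
          = (∑ j ∈ Finset.range n, (‖a (j + 1)‖ - ‖a j‖)) * Real.cos α
            + (∑ j ∈ Finset.range n, (‖a (j + 1)‖ + ‖a j‖))
              * Real.sin α := by
            rw [Finset.sum_mul, Finset.sum_mul, ← Finset.sum_add_distrib]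
        _ = _ := by rw [t1, t2]
    have hchain2 : ∑ j ∈ Finset.range n, ‖a (j + 1) - a j‖
        ≤ (‖a n‖ - ‖a 0‖) * Real.cos α
          + (2 * (∑ j ∈ Finset.range (n + 1), ‖a j‖)
              - ‖a 0‖ - ‖a n‖) * Real.sin α := by
      rw [← hsum]; exact Finset.sum_le_sum hbj
    -- absolute value of the key identity
    have hP : (0:ℝ) < ‖z‖ ^ (n + 1) := by positivity
    have hPrep : ∀ j ∈ Finset.range n, ‖(a (j + 1) - a j) * z ^ (j + 1)‖
        ≤ ‖a (j + 1) - a j‖ * ‖z‖ ^ (n + 1) := by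
      intro j hj
      have hjn := Finset.mem_range.mp hj
      rw [norm_mul, norm_pow]
      exact mul_le_mul_of_nonneg_left
        (pow_le_pow_right₀ hz1 (by omega)) (norm_nonneg _)
    have habsRHS : ‖((k : ℂ) * a (n + 1) - a n) * z ^ (n + 1)
          + (∑ j ∈ Finset.range n, (a (j + 1) - a j) * z ^ (j + 1)) + a 0‖
        ≤ (‖(k : ℂ) * a (n + 1) - a n‖
            + (∑ j ∈ Finset.range n, ‖a (j + 1) - a j‖)
            + ‖a 0‖) * ‖z‖ ^ (n + 1) := by
      calc ‖((k : ℂ) * a (n + 1) - a n) * z ^ (n + 1)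
            + (∑ j ∈ Finset.range n, (a (j + 1) - a j) * z ^ (j + 1)) + a 0‖
          ≤ ‖((k : ℂ) * a (n + 1) - a n) * z ^ (n + 1)‖
            + ‖∑ j ∈ Finset.range n, (a (j + 1) - a j) * z ^ (j + 1)‖
            + ‖a 0‖ := by
            refine (norm_add_le _ _).trans ?_
            gcongr
            exact norm_add_le _ _
        _ ≤ ‖(k : ℂ) * a (n + 1) - a n‖ * ‖z‖ ^ (n + 1)
            + (∑ j ∈ Finset.range n, ‖a (j + 1) - a j‖) * ‖z‖ ^ (n + 1)
            + ‖a 0‖ * ‖z‖ ^ (n + 1) := by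
            gcongr
            · rw [norm_mul, norm_pow]
            · refine (norm_sum_le _ _).trans ?_
              rw [Finset.sum_mul]
              exact Finset.sum_le_sum hPrep
            · have hpow : (1:ℝ) ≤ ‖z‖ ^ (n + 1) := by
                calc (1:ℝ) = 1 ^ (n + 1) := by simp
                  _ ≤ ‖z‖ ^ (n + 1) := pow_le_pow_left₀ zero_le_one hz1 _
              exact le_mul_of_one_le_right (norm_nonneg _) hpow
        _ = _ := by ring
    have hmain : ‖a (n + 1)‖ * ‖z + (k : ℂ) - 1‖
        ≤ ‖(k : ℂ) * a (n + 1) - a n‖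
          + (∑ j ∈ Finset.range n, ‖a (j + 1) - a j‖)
          + ‖a 0‖ := by
      have lhs_eq : ‖a (n + 1) * z ^ (n + 1) * (z + (k : ℂ) - 1)‖
          = ‖a (n + 1)‖ * ‖z + (k : ℂ) - 1‖
            * ‖z‖ ^ (n + 1) := by
        rw [norm_mul, norm_mul, norm_pow]; ring
      have := habsRHS
      rw [← hkey, lhs_eq] at this
      exact le_of_mul_le_mul_right this hP
    linarith [hmain, hb1, hchain2]
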